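/- Let f_1,...,f_m ∈ ℝ^n, and let α(x) = (|⟨x,f_j⟩|)_{j=1}^m, d(x,y) = min(‖x-y‖,‖x+y‖). Suppose S ⊆ {1,...,m} and u, v ∈ ℝ^n are unit vectors with Σ_{j∈S}|⟨u,f_j⟩|² + Σ_{j∉S}|⟨v,f_j⟩|² = Δ². Then for x = u+v and y = u-v one has ‖α(x) - α(y)‖² ≤ 4Δ² and d(x,y) = 2, hence ‖α(x)-α(y)‖/d(x,y) ≤ Δ. -/

import Mathlib

open scoped RealInnerProductSpace BigOperators

lemma key_abs (a b : ℝ) : (|a + b| - |a - b|) ^ 2 ≤ 4 * min (a ^ 2) (b ^ 2) := by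
  rcases le_total (a ^ 2) (b ^ 2) with hle | hle <;>
    [rw [min_eq_left hle]; rw [min_eq_right hle]] <;>
  rcases abs_cases (a + b) with ⟨h1, _⟩ | ⟨h1, _⟩ <;>
  rcases abs_cases (a - b) with ⟨h2, _⟩ | ⟨h2, _⟩ <;> nlinarith

theorem stmt15 {n m : ℕ} (f : Fin m → EuclideanSpace ℝ (Fin n))
    (α : EuclideanSpace ℝ (Fin n) → EuclideanSpace ℝ (Fin m))
    (hα : ∀ z j, α z j = abs (⟪z, f j⟫))
    (S : Finset (Fin m)) (u v : EuclideanSpace ℝ (Fin n))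
    (hu : ‖u‖ = 1) (hv : ‖v‖ = 1)
    (Δ : ℝ) (hΔ : 0 ≤ Δ)
    (h : ∑ j ∈ S, abs (⟪u, f j⟫) ^ 2 + ∑ j ∈ Sᶜ, abs (⟪v, f j⟫) ^ 2 = Δ ^ 2) :
    ‖α (u + v) - α (u - v)‖ ^ 2 ≤ 4 * Δ ^ 2 ∧
    min ‖(u + v) - (u - v)‖ ‖(u + v) + (u - v)‖ = 2 ∧
    ‖α (u + v) - α (u - v)‖ / min ‖(u + v) - (u - v)‖ ‖(u + v) + (u - v)‖ ≤ Δ := by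
  have hd : min ‖(u + v) - (u - v)‖ ‖(u + v) + (u - v)‖ = 2 := by
    have h1 : (u + v) - (u - v) = (2 : ℝ) • v := by module
    have h2 : (u + v) + (u - v) = (2 : ℝ) • u := by module
    rw [h1, h2, norm_smul, norm_smul, hu, hv]
    norm_num
  have hsq : ‖α (u + v) - α (u - v)‖ ^ 2 ≤ 4 * Δ ^ 2 := by
    have hnorm : ‖α (u + v) - α (u - v)‖ ^ 2
        = ∑ j, (α (u + v) j - α (u - v) j) ^ 2 := by
      rw [EuclideanSpace.norm_eq, Real.sq_sqrt (by positivity)]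
      simp [sq_abs]
    rw [hnorm]
    have hbound : ∀ j, (α (u + v) j - α (u - v) j) ^ 2
        ≤ 4 * (if j ∈ S then (|⟪u, f j⟫|) ^ 2 else (|⟪v, f j⟫|) ^ 2) := by
      intro j
      have hx : ⟪u + v, f j⟫ = ⟪u, f j⟫ + ⟪v, f j⟫ := inner_add_left _ _ _
      have hy : ⟪u - v, f j⟫ = ⟪u, f j⟫ - ⟪v, f j⟫ := inner_sub_left _ _ _
      rw [hα, hα, hx, hy]
      have := key_abs (⟪u, f j⟫) (⟪v, f j⟫)
      split_ifs with hj
      · calc _ ≤ 4 * min (⟪u, f j⟫ ^ 2) (⟪v, f j⟫ ^ 2) := this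
          _ ≤ _ := by rw [sq_abs]; nlinarith [min_le_left (⟪u, f j⟫ ^ 2) (⟪v, f j⟫ ^ 2)]
      · calc _ ≤ 4 * min (⟪u, f j⟫ ^ 2) (⟪v, f j⟫ ^ 2) := this
          _ ≤ _ := by rw [sq_abs]; nlinarith [min_le_right (⟪u, f j⟫ ^ 2) (⟪v, f j⟫ ^ 2)]
    calc ∑ j, (α (u + v) j - α (u - v) j) ^ 2
        ≤ ∑ j, 4 * (if j ∈ S then (|⟪u, f j⟫|) ^ 2 else (|⟪v, f j⟫|) ^ 2) :=
          Finset.sum_le_sum fun j _ => hbound j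
      _ = 4 * Δ ^ 2 := by
          rw [← Finset.mul_sum, ← h, Finset.sum_ite]
          simp [Finset.filter_mem_eq_inter, Finset.filter_not, Finset.compl_eq_univ_sdiff]
  refine ⟨hsq, hd, ?_⟩
  rw [hd]
  rw [div_le_iff₀ (by norm_num)]
  have hn : 0 ≤ ‖α (u + v) - α (u - v)‖ := norm_nonneg _
  nlinarith [hsq]
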